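/- arXiv:0709.1711 — 2 statements merged into one kernel-verified Lean document; each statement's English description precedes it below -/
import Mathlib

section
/- Let k ≥ 3 and let p₁,…,p_k ∈ W be nonzero nonpositive vectors (indices modulo k) such that ⟨p_i, p_{i+1}⟩ ≠ 0 for all i. Then the sum Σ_{i=1}^{k} Area Δ(c, p_i, p_{i+1}) = Σ_{i=1}^{k} 2·arg(−⟨c,p_i⟩·⟨p_i,p_{i+1}⟩·⟨p_{i+1},c⟩) takes the same value for every negative vector c ∈ W; that is, the area of the closed geodesic polygon with successive vertices p₁,…,p_k does not depend on the choice of the centre c. (Note that ⟨c,p⟩ ≠ 0 automatically whenever c is negative and p is nonzero nonpositive.) -/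
noncomputable section
open Matrix Complex
namespace HView

abbrev W : Type := Fin 2 → ℂ

def herm (x y : W) : ℂ := x 0 * (starRingEnd ℂ) (y 0) - x 1 * (starRingEnd ℂ) (y 1)

def IsNeg (p : W) : Prop := p ≠ 0 ∧ (herm p p).re < 0
def IsIso (p : W) : Prop := p ≠ 0 ∧ herm p p = 0
def IsNonpos (p : W) : Prop := p ≠ 0 ∧ (herm p p).re ≤ 0

def triArea (p₁ p₂ p₃ : W) : ℝ :=
  2 * Complex.arg (-(herm p₁ p₂ * herm p₂ p₃ * herm p₃ p₁))

def Jm : Matrix (Fin 2) (Fin 2) ℂ := !![1, 0; 0, -1]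

def SU11 : Subgroup (SpecialLinearGroup (Fin 2) ℂ) where
  carrier := {A | (A : Matrix (Fin 2) (Fin 2) ℂ)ᴴ * Jm * (A : Matrix (Fin 2) (Fin 2) ℂ) = Jm}
  one_mem' := by simp
  mul_mem' := by
    intro A B hA hB
    simp only [Set.mem_setOf_eq] at hA hB ⊢
    have hco : ((A * B : SpecialLinearGroup (Fin 2) ℂ) : Matrix (Fin 2) (Fin 2) ℂ)
        = (A : Matrix (Fin 2) (Fin 2) ℂ) * (B : Matrix (Fin 2) (Fin 2) ℂ) := rfl
    rw [hco, conjTranspose_mul]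
    calc (B : Matrix (Fin 2) (Fin 2) ℂ)ᴴ * (A : Matrix (Fin 2) (Fin 2) ℂ)ᴴ * Jm *
          ((A : Matrix (Fin 2) (Fin 2) ℂ) * (B : Matrix (Fin 2) (Fin 2) ℂ))
        = (B : Matrix (Fin 2) (Fin 2) ℂ)ᴴ *
          ((A : Matrix (Fin 2) (Fin 2) ℂ)ᴴ * Jm * (A : Matrix (Fin 2) (Fin 2) ℂ)) *
          (B : Matrix (Fin 2) (Fin 2) ℂ) := by noncomm_ring
      _ = Jm := by rw [hA]; exact hB
  inv_mem' := by
    intro A hA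
    simp only [Set.mem_setOf_eq] at hA ⊢
    have h1 : (A : Matrix (Fin 2) (Fin 2) ℂ) *
        ((A⁻¹ : SpecialLinearGroup (Fin 2) ℂ) : Matrix (Fin 2) (Fin 2) ℂ) = 1 := by
      rw [← Matrix.SpecialLinearGroup.coe_mul, mul_inv_cancel,
        Matrix.SpecialLinearGroup.coe_one]
    have h2 : ((A⁻¹ : SpecialLinearGroup (Fin 2) ℂ) : Matrix (Fin 2) (Fin 2) ℂ)ᴴ *
        (A : Matrix (Fin 2) (Fin 2) ℂ)ᴴ = 1 := by
      rw [← conjTranspose_mul, h1, conjTranspose_one]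
    calc ((A⁻¹ : SpecialLinearGroup (Fin 2) ℂ) : Matrix (Fin 2) (Fin 2) ℂ)ᴴ * Jm *
          ((A⁻¹ : SpecialLinearGroup (Fin 2) ℂ) : Matrix (Fin 2) (Fin 2) ℂ)
        = ((A⁻¹ : SpecialLinearGroup (Fin 2) ℂ) : Matrix (Fin 2) (Fin 2) ℂ)ᴴ *
          ((A : Matrix (Fin 2) (Fin 2) ℂ)ᴴ * Jm * (A : Matrix (Fin 2) (Fin 2) ℂ)) *
          ((A⁻¹ : SpecialLinearGroup (Fin 2) ℂ) : Matrix (Fin 2) (Fin 2) ℂ) := by rw [hA]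
      _ = (((A⁻¹ : SpecialLinearGroup (Fin 2) ℂ) : Matrix (Fin 2) (Fin 2) ℂ)ᴴ *
            (A : Matrix (Fin 2) (Fin 2) ℂ)ᴴ) * Jm *
          ((A : Matrix (Fin 2) (Fin 2) ℂ) *
            ((A⁻¹ : SpecialLinearGroup (Fin 2) ℂ) : Matrix (Fin 2) (Fin 2) ℂ)) := by noncomm_ring
      _ = Jm := by rw [h1, h2, one_mul, mul_one]


instance : Fact (Even (Fintype.card (Fin 2))) := ⟨by decide⟩

def negOne : SU11 := ⟨-1, by
  show ((-1 : SpecialLinearGroup (Fin 2) ℂ) : Matrix (Fin 2) (Fin 2) ℂ)ᴴ * Jm *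
    ((-1 : SpecialLinearGroup (Fin 2) ℂ) : Matrix (Fin 2) (Fin 2) ℂ) = Jm
  simp⟩

lemma negOne_mul_negOne : negOne * negOne = 1 := by
  apply Subtype.ext
  show ((-1 : SpecialLinearGroup (Fin 2) ℂ)) * (-1) = 1
  apply Subtype.ext
  show ((-1 : Matrix (Fin 2) (Fin 2) ℂ)) * (-1) = 1
  simp

lemma negOne_central (g : SU11) : g * negOne = negOne * g := by
  apply Subtype.ext
  apply Subtype.ext
  show ((g : SpecialLinearGroup (Fin 2) ℂ) : Matrix (Fin 2) (Fin 2) ℂ) * (-1)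
      = (-1) * ((g : SpecialLinearGroup (Fin 2) ℂ) : Matrix (Fin 2) (Fin 2) ℂ)
  simp

def pm1 : Subgroup SU11 where
  carrier := {1, negOne}
  one_mem' := Or.inl rfl
  mul_mem' := by
    rintro a b (rfl | ha) (rfl | hb)
    · exact Or.inl (one_mul 1)
    · rw [Set.mem_singleton_iff] at hb; subst hb
      exact Or.inr (by rw [one_mul]; rfl)
    · rw [Set.mem_singleton_iff] at ha; subst ha
      exact Or.inr (by rw [mul_one]; rfl)
    · rw [Set.mem_singleton_iff] at ha hb; subst ha; subst hb
      exact Or.inl negOne_mul_negOne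
  inv_mem' := by
    rintro a (rfl | ha)
    · exact Or.inl inv_one
    · rw [Set.mem_singleton_iff] at ha; subst ha
      refine Or.inr ?_
      rw [Set.mem_singleton_iff, inv_eq_iff_mul_eq_one, negOne_mul_negOne]

instance pm1_normal : pm1.Normal := by
  constructor
  intro x hx g
  rcases hx with rfl | hx
  · simpa using pm1.one_mem
  · rw [Set.mem_singleton_iff] at hx; subst hx
    have h : g * negOne * g⁻¹ = negOne := by
      rw [negOne_central, mul_assoc, mul_inv_cancel, mul_one]
    rw [h]
    exact Or.inr rfl

abbrev PU11 := SU11 ⧸ pm1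

def mobius (A : SU11) (z : ℂ) : ℂ :=
  (((A : SpecialLinearGroup (Fin 2) ℂ) : Matrix (Fin 2) (Fin 2) ℂ) 0 0 * z +
    ((A : SpecialLinearGroup (Fin 2) ℂ) : Matrix (Fin 2) (Fin 2) ℂ) 0 1) /
  (((A : SpecialLinearGroup (Fin 2) ℂ) : Matrix (Fin 2) (Fin 2) ℂ) 1 0 * z +
    ((A : SpecialLinearGroup (Fin 2) ℂ) : Matrix (Fin 2) (Fin 2) ℂ) 1 1)

lemma mobius_mul_negOne (A : SU11) (z : ℂ) : mobius (A * negOne) z = mobius A z := by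
  have hm : (((A * negOne : SU11) : SpecialLinearGroup (Fin 2) ℂ) : Matrix (Fin 2) (Fin 2) ℂ)
      = -(((A : SpecialLinearGroup (Fin 2) ℂ) : Matrix (Fin 2) (Fin 2) ℂ)) := by
    show ((A : SpecialLinearGroup (Fin 2) ℂ) : Matrix (Fin 2) (Fin 2) ℂ) *
      (-1 : Matrix (Fin 2) (Fin 2) ℂ) = _
    simp
  set M := ((A : SpecialLinearGroup (Fin 2) ℂ) : Matrix (Fin 2) (Fin 2) ℂ) with hM
  unfold mobius
  rw [hm]
  simp only [Matrix.neg_apply]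
  rw [show -M 0 0 * z + -M 0 1 = -(M 0 0 * z + M 0 1) by ring,
    show -M 1 0 * z + -M 1 1 = -(M 1 0 * z + M 1 1) by ring, neg_div_neg_eq]

def pact (g : PU11) : ℂ → ℂ :=
  Quotient.liftOn' g (fun A => mobius A) (by
    intro a b hab
    have hab' : a⁻¹ * b ∈ pm1 := QuotientGroup.leftRel_apply.mp hab
    have key : b = a ∨ b = a * negOne := by
      rcases hab' with h | h
      · left
        have : a⁻¹ * b = 1 := h
        rw [inv_mul_eq_one] at this
        exact this.symm
      · right
        rw [Set.mem_singleton_iff] at h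
        rw [inv_mul_eq_iff_eq_mul] at h
        exact h
    funext z
    rcases key with rfl | rfl
    · rfl
    · exact (mobius_mul_negOne a z).symm)

lemma pact_mk (A : SU11) (z : ℂ) : pact (QuotientGroup.mk A : PU11) z = mobius A z := rfl


instance : TopologicalSpace (SpecialLinearGroup (Fin 2) ℂ) :=
  instTopologicalSpaceSubtype

def IsHyperbolic (g : PU11) : Prop :=
  ∃ A : SU11, (QuotientGroup.mk A : PU11) = g ∧
    (Matrix.trace ((A : SpecialLinearGroup (Fin 2) ℂ) : Matrix (Fin 2) (Fin 2) ℂ)).im = 0 ∧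
    2 < |(Matrix.trace ((A : SpecialLinearGroup (Fin 2) ℂ) : Matrix (Fin 2) (Fin 2) ℂ)).re|

def IsAttractor (g : PU11) (z : ℂ) : Prop :=
  ‖z‖ = 1 ∧ ∃ A : SU11, (QuotientGroup.mk A : PU11) = g ∧
    ∃ lam : ℂ, 1 < ‖lam‖ ∧
      ((A : SpecialLinearGroup (Fin 2) ℂ) : Matrix (Fin 2) (Fin 2) ℂ).mulVec ![z, 1]
        = lam • ![z, 1]

def IsRepeller (g : PU11) (z : ℂ) : Prop :=
  ‖z‖ = 1 ∧ ∃ A : SU11, (QuotientGroup.mk A : PU11) = g ∧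
    ∃ lam : ℂ, ‖lam‖ < 1 ∧
      ((A : SpecialLinearGroup (Fin 2) ℂ) : Matrix (Fin 2) (Fin 2) ℂ).mulVec ![z, 1]
        = lam • ![z, 1]

def IsPositiveCycle (l : List ℂ) : Prop :=
  3 ≤ l.length ∧ ∃ t : Fin l.length → ℝ,
    StrictMono t ∧ (∀ j k : Fin l.length, t j - t k < 2 * Real.pi) ∧
    ∀ j : Fin l.length, l.get j = Complex.exp (Complex.I * (t j : ℂ))

def IsNegativeCycle (l : List ℂ) : Prop :=
  3 ≤ l.length ∧ ∃ t : Fin l.length → ℝ,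
    StrictAnti t ∧ (∀ j k : Fin l.length, t j - t k < 2 * Real.pi) ∧
    ∀ j : Fin l.length, l.get j = Complex.exp (Complex.I * (t j : ℂ))

def longRel (n : ℕ) : FreeGroup (ZMod n) :=
  (((List.range n).map (fun k => FreeGroup.of ((k + 1 : ℕ) : ZMod n))).reverse).prod

def Hrels (n : ℕ) : Set (FreeGroup (ZMod n)) :=
  {x | ∃ i : ZMod n, x = FreeGroup.of i * FreeGroup.of i} ∪ {longRel n}

abbrev H (n : ℕ) := PresentedGroup (Hrels n)

def r (n : ℕ) (i : ZMod n) : H n := PresentedGroup.of i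

def pts {n : ℕ} (A : ZMod n → SU11) (p : W) : ℕ → W
  | 0 => p
  | (k+1) => (((A ((k + 1 : ℕ) : ZMod n) : SpecialLinearGroup (Fin 2) ℂ)
      : Matrix (Fin 2) (Fin 2) ℂ)).mulVec (pts A p k)

def IsLift {n : ℕ} (ρ : H n →* PU11) (A : ZMod n → SU11) : Prop :=
  (∀ i : ZMod n, (QuotientGroup.mk (A i) : PU11) = ρ (r n i)) ∧
  ((((List.range n).map (fun k => A ((k + 1 : ℕ) : ZMod n))).reverse).prod = 1 ∨
   (((List.range n).map (fun k => A ((k + 1 : ℕ) : ZMod n))).reverse).prod = negOne)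

def areaRep (n : ℕ) (A : ZMod n → SU11) (c p : W) : ℝ :=
  ∑ i ∈ Finset.range n, triArea c (pts A p (i + 1)) (pts A p (i + 2))

def HasArea {n : ℕ} (ρ : H n →* PU11) (a : ℝ) : Prop :=
  ∀ A : ZMod n → SU11, IsLift ρ A → ∀ c p : W, IsNeg c → IsNeg p → areaRep n A c p = a

def orbitSeq {n : ℕ} (ρ : H n →* PU11) (j : ZMod n) (z : ℂ) : ℕ → ℂ
  | 0 => z
  | (k+1) => pact (ρ (r n (j + (k : ℕ)))) (orbitSeq ρ j z k)

def iCycle {n : ℕ} (ρ : H n →* PU11) (i : ZMod n) (b e : ℂ) : List ℂ :=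
  ((List.range (n - 2)).map (fun k => [orbitSeq ρ (i + 1) b k, orbitSeq ρ (i + 1) e k])).flatten

def IsReflection (g : PU11) (q : W) : Prop :=
  ∃ A : SU11, (QuotientGroup.mk A : PU11) = g ∧
    ∀ x : W, ((A : SpecialLinearGroup (Fin 2) ℂ) : Matrix (Fin 2) (Fin 2) ℂ).mulVec x
      = Complex.I • (x - (2 * herm x q / herm q q) • q)

def Gsub (n : ℕ) : Subgroup (H n) :=
  Subgroup.closure {x : H n | ∃ i j : ZMod n, x = r n i * r n j}

lemma rr_mem (n : ℕ) (i j : ZMod n) : r n i * r n j ∈ Gsub n :=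
  Subgroup.subset_closure ⟨i, j, rfl⟩

lemma rrrr_mem (n : ℕ) (i j k l : ZMod n) :
    r n i * r n j * r n k * r n l ∈ Gsub n := by
  have h : r n i * r n j * r n k * r n l = (r n i * r n j) * (r n k * r n l) := by
    rw [mul_assoc]
  rw [h]
  exact mul_mem (rr_mem n i j) (rr_mem n k l)

def v (n : ℕ) (k : ℕ) : H n :=
  (((List.range (k % n)).map (fun m => r n ((m + 1 : ℕ) : ZMod n))).reverse).prod

def w0 (n : ℕ) (i : ℕ) : H n := if Even i then v n i else v n i * r n 0

def w (n : ℕ) (j : ℕ) : H n :=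
  if j % (2 * n - 2) ≤ n - 2 then w0 n (j % (2 * n - 2))
  else r n 0 * w0 n (j % (2 * n - 2) - (n - 1)) * r n 0

def IsLiftGW {n : ℕ} (ρ : ↥(Gsub n) →* PU11) (u : ℕ → H n) (B : ℕ → SU11) : Prop :=
  ∀ (j : ℕ) (h : u j ∈ Gsub n), (QuotientGroup.mk (B j) : PU11) = ρ ⟨u j, h⟩

def areaG (n : ℕ) (B : ℕ → SU11) (c p q : W) : ℝ :=
  ∑ j ∈ Finset.range (2 * n - 2),
    triArea c
      (((B j : SpecialLinearGroup (Fin 2) ℂ) : Matrix (Fin 2) (Fin 2) ℂ).mulVec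
        (if Even j then p else q))
      (((B ((j + 1) % (2 * n - 2)) : SpecialLinearGroup (Fin 2) ℂ)
          : Matrix (Fin 2) (Fin 2) ℂ).mulVec
        (if Even ((j + 1) % (2 * n - 2)) then p else q))

def HasAreaG {n : ℕ} (ρ : ↥(Gsub n) →* PU11) (a : ℝ) : Prop :=
  ∀ B : ℕ → SU11, IsLiftGW ρ (w n) B →
    ∀ c p q : W, IsNeg c → IsNeg p → IsNeg q → areaG n B c p q = a

def bigCycle (n : ℕ) (s t s' t' : ZMod n → ℂ) (wd : ℕ → ℂ) : List ℂ :=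
  [t 1, s 2, wd 2] ++
  ((List.range (n - 4)).map
    (fun k => [s ((k + 3 : ℕ) : ZMod n), t ((k + 3 : ℕ) : ZMod n), wd (k + 3)])).flatten ++
  [t ((n - 1 : ℕ) : ZMod n), s ((n : ℕ) : ZMod n)] ++
  [s' 2, wd (n + 1)] ++
  ((List.range (n - 4)).map
    (fun k => [s' ((k + 3 : ℕ) : ZMod n), t' ((k + 3 : ℕ) : ZMod n), wd (n + k + 2)])).flatten ++
  [t' ((n - 1 : ℕ) : ZMod n)]

def IsSE {n : ℕ} (ρ ρ' : H n →* PU11) (i : ZMod n) (t : ℝ) : Prop :=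
  IsHyperbolic (ρ (r n i * r n (i - 1))) ∧
  ∃ φ : ℝ → PU11, Continuous φ ∧ (∀ s u : ℝ, φ (s + u) = φ s * φ u) ∧
    IsHyperbolic (φ 1) ∧ φ 1 * φ 1 = ρ (r n i * r n (i - 1)) ∧
    (∀ j : ZMod n, j ≠ i - 1 → j ≠ i → ρ' (r n j) = ρ (r n j)) ∧
    ρ' (r n (i - 1)) = φ t * ρ (r n (i - 1)) * (φ t)⁻¹ ∧
    ρ' (r n i) = φ t * ρ (r n i) * (φ t)⁻¹

def ConjRep {n : ℕ} (ρ ρ' : H n →* PU11) : Prop :=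
  ∃ g : PU11, ∀ h : H n, ρ' h = g * ρ h * g⁻¹

def NormalizedAt {n : ℕ} (ρ : H n →* PU11) (i : ZMod n) : Prop :=
  IsRepeller (ρ (r n i * r n (i - 1))) (-1) ∧
  IsAttractor (ρ (r n i * r n (i - 1))) 1 ∧
  pact (ρ (r n i)) 0 = 0

def PPlus {n : ℕ} (ρ : H n →* PU11) : Prop :=
  Function.Injective ρ ∧ DiscreteTopology (MonoidHom.range ρ) ∧
  HasArea ρ (((n : ℝ) - 4) * Real.pi)

def tupleAt {n : ℕ} (ρ : H n →* PU11) (i : ZMod n) : List ℂ :=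
  (iCycle ρ i (-1) 1).drop 2

def KPlusL (n : ℕ) (l : List ℂ) : Prop :=
  l.length = 2 * n - 6 ∧ (∀ z ∈ l, ‖z‖ = 1 ∧ 0 < z.im) ∧ IsPositiveCycle l

def PrelsList (n : ℕ) : Set (FreeGroup (ZMod n)) :=
  { ((List.range n).map (fun k => FreeGroup.of ((n - k : ℕ) : ZMod n))).prod,
    ((List.range (n / 2)).map (fun k => FreeGroup.of ((n - 2 * k : ℕ) : ZMod n))).prod,
    ((List.range (n / 2)).map (fun k => FreeGroup.of ((n - 1 - 2 * k : ℕ) : ZMod n))).prod }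

abbrev Pgrp (n : ℕ) := PresentedGroup (PrelsList n)

def gp (n : ℕ) (i : ZMod n) : Pgrp n := PresentedGroup.of i


lemma herm_swap (x y : W) : herm y x = (starRingEnd ℂ) (herm x y) := by
  simp only [herm, map_sub, _root_.map_mul, Complex.conj_conj]; ring

lemma herm_self (x : W) : herm x x = ↑((herm x x).re) := by
  have : herm x x = ↑(Complex.normSq (x 0) - Complex.normSq (x 1)) := by
    rw [herm, Complex.mul_conj, Complex.mul_conj]; push_cast; ring
  rw [this]; simp

lemma herm_self_re (x : W) : (herm x x).re = Complex.normSq (x 0) - Complex.normSq (x 1) := by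
  have : herm x x = ↑(Complex.normSq (x 0) - Complex.normSq (x 1)) := by
    rw [herm, Complex.mul_conj, Complex.mul_conj]; push_cast; ring
  rw [this, Complex.ofReal_re]

lemma gram2 (x y : W) : Complex.normSq (herm x y)
    = (herm x x).re * (herm y y).re + Complex.normSq (x 0 * y 1 - x 1 * y 0) := by
  have h : herm x y * (starRingEnd ℂ) (herm x y)
      = herm x x * herm y y
        + (x 0 * y 1 - x 1 * y 0) * (starRingEnd ℂ) (x 0 * y 1 - x 1 * y 0) := by
    simp only [herm, map_sub, _root_.map_mul, Complex.conj_conj]; ring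
  rw [Complex.mul_conj, Complex.mul_conj, herm_self x, herm_self y] at h
  exact_mod_cast h

lemma key3 (c p q : W) : 2 * (herm c p * herm p q * herm q c).re
    = Complex.normSq (herm c q) * (herm p p).re
      + Complex.normSq (herm c p) * (herm q q).re
      + Complex.normSq (herm p q) * (herm c c).re
      - (herm c c).re * (herm p p).re * (herm q q).re := by
  have h : herm c p * herm p q * herm q c + (starRingEnd ℂ) (herm c p * herm p q * herm q c)
      = herm c q * (starRingEnd ℂ) (herm c q) * herm p p
        + herm c p * (starRingEnd ℂ) (herm c p) * herm q q
        + herm p q * (starRingEnd ℂ) (herm p q) * herm c c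
        - herm c c * herm p p * herm q q := by
    simp only [herm, map_sub, _root_.map_mul, Complex.conj_conj]; ring
  rw [Complex.add_conj, Complex.mul_conj, Complex.mul_conj, Complex.mul_conj,
    herm_self c, herm_self p, herm_self q] at h
  exact_mod_cast h

lemma herm_ne_zero {c q : W} (hc : IsNeg c) (hq : IsNonpos q) : herm c q ≠ 0 := by
  intro h
  have hg := gram2 c q
  rw [h] at hg
  simp only [Complex.normSq_zero] at hg
  have h1 : 0 ≤ (herm c c).re * (herm q q).re := by
    have := mul_nonneg (neg_nonneg.mpr hc.2.le) (neg_nonneg.mpr hq.2)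
    simpa [neg_mul_neg] using this
  have h2 : 0 ≤ Complex.normSq (c 0 * q 1 - c 1 * q 0) := Complex.normSq_nonneg _
  have h3 : (herm c c).re * (herm q q).re = 0 := by linarith
  have h4 : (herm q q).re = 0 := by
    rcases mul_eq_zero.mp h3 with h | h
    · exact absurd h (ne_of_lt hc.2)
    · exact h
  have h5 : c 0 * q 1 - c 1 * q 0 = 0 := by
    have : Complex.normSq (c 0 * q 1 - c 1 * q 0) = 0 := by linarith
    exact Complex.normSq_eq_zero.mp this
  have h6 : Complex.normSq (c 0) * Complex.normSq (q 1)
      = Complex.normSq (c 1) * Complex.normSq (q 0) := by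
    have := congrArg Complex.normSq (sub_eq_zero.mp h5)
    simpa [Complex.normSq_mul] using this
  have hAc := hc.2
  rw [herm_self_re] at hAc
  have hQ := h4
  rw [herm_self_re] at hQ
  have hq1 : Complex.normSq (q 1) = 0 := by
    by_contra hne
    have hpos : 0 < Complex.normSq (q 1) :=
      lt_of_le_of_ne (Complex.normSq_nonneg _) (Ne.symm hne)
    have h7 : Complex.normSq (q 0) = Complex.normSq (q 1) := by linarith
    rw [h7] at h6
    nlinarith [mul_pos hpos (show (0:ℝ) < Complex.normSq (c 1) - Complex.normSq (c 0) from by linarith)]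
  have hq0 : Complex.normSq (q 0) = 0 := by linarith
  exact hq.1 (funext fun i => by
    fin_cases i
    · exact Complex.normSq_eq_zero.mp hq0
    · exact Complex.normSq_eq_zero.mp hq1)

lemma T_re_neg {c p q : W} (hc : IsNeg c) (hp : IsNonpos p) (hq : IsNonpos q)
    (hpq : herm p q ≠ 0) : (herm c p * herm p q * herm q c).re < 0 := by
  have hk := key3 c p q
  have hg := gram2 c q
  have h1 : (herm c c).re < 0 := hc.2
  have h2 : (herm p p).re ≤ 0 := hp.2
  have h3 : (herm q q).re ≤ 0 := hq.2
  have h4 : 0 ≤ Complex.normSq (herm c p) := Complex.normSq_nonneg _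
  have h5 : 0 < Complex.normSq (herm p q) := Complex.normSq_pos.mpr hpq
  have h6 : (herm c c).re * (herm q q).re ≤ Complex.normSq (herm c q) := by
    have := Complex.normSq_nonneg (c 0 * q 1 - c 1 * q 0); linarith
  nlinarith [mul_nonneg (neg_nonneg.mpr h2) (sub_nonneg.mpr h6),
    mul_nonneg (neg_nonneg.mpr h3) h4, mul_pos (neg_pos.mpr h1) h5]

lemma prod_cycle {k : ℕ} (hk : 0 < k) (g : ZMod k → ℂ) :
    ∏ i ∈ Finset.range k, g ((i : ZMod k) + 1) = ∏ i ∈ Finset.range k, g (i : ZMod k) := by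
  refine Finset.prod_nbij' (fun i => (i + 1) % k) (fun j => (j + (k - 1)) % k) ?_ ?_ ?_ ?_ ?_
  · intro a _; exact Finset.mem_range.mpr (Nat.mod_lt _ hk)
  · intro a _; exact Finset.mem_range.mpr (Nat.mod_lt _ hk)
  · intro a ha
    show ((a + 1) % k + (k - 1)) % k = a
    rw [Nat.mod_add_mod, show a + 1 + (k - 1) = a + k by omega, Nat.add_mod_right,
      Nat.mod_eq_of_lt (Finset.mem_range.mp ha)]
  · intro a ha
    show ((a + (k - 1)) % k + 1) % k = a
    rw [Nat.mod_add_mod, show a + (k - 1) + 1 = a + k by omega, Nat.add_mod_right,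
      Nat.mod_eq_of_lt (Finset.mem_range.mp ha)]
  · intro a _
    congr 1
    rw [ZMod.natCast_mod]
    push_cast
    ring

lemma exp_two_arg (v : ℂ) (hv : v ≠ 0) :
    Complex.exp (↑(2 * Complex.arg v) * Complex.I) = v ^ 2 / ↑(Complex.normSq v) := by
  have habs : ((‖v‖ : ℝ) : ℂ) ≠ 0 := by
    exact_mod_cast (norm_ne_zero_iff.mpr hv)
  have hexp : Complex.exp (↑(Complex.arg v) * Complex.I) = v / ↑(‖v‖) := by
    rw [eq_div_iff habs, mul_comm]
    exact Complex.norm_mul_exp_arg_mul_I v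
  have h2 : (↑(2 * Complex.arg v) : ℂ) * Complex.I
      = ↑(Complex.arg v) * Complex.I + ↑(Complex.arg v) * Complex.I := by
    push_cast; ring
  rw [h2, Complex.exp_add, hexp, div_mul_div_comm, ← sq, ← sq, ← Complex.ofReal_pow,
    Complex.sq_norm]

lemma aux_div (N : ℝ) (P : ℂ) (hN : N ≠ 0) (hP : P ≠ 0) :
    ((N : ℂ) * P) ^ 2 / ↑(Complex.normSq ((N : ℂ) * P)) = P ^ 2 / ↑(Complex.normSq P) := by
  have h1 : Complex.normSq P ≠ 0 := by
    exact fun h => hP (Complex.normSq_eq_zero.mp h)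
  have hN' : (N : ℂ) ≠ 0 := by exact_mod_cast hN
  have h3 : ((Complex.normSq P : ℝ) : ℂ) ≠ 0 := by exact_mod_cast h1
  rw [Complex.normSq_mul, Complex.normSq_ofReal]
  push_cast
  rw [div_eq_div_iff (mul_ne_zero (mul_ne_zero hN' hN') h3) h3]
  ring

lemma exp_areaSum {k : ℕ} (hk : 3 ≤ k) (p : ZMod k → W)
    (hp : ∀ i : ZMod k, IsNonpos (p i)) (hadj : ∀ i : ZMod k, herm (p i) (p (i + 1)) ≠ 0)
    (c : W) (hc : IsNeg c) :
    Complex.exp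
        (↑(∑ i ∈ Finset.range k, triArea c (p (i : ZMod k)) (p ((i : ZMod k) + 1))) * Complex.I)
      = (∏ i ∈ Finset.range k, herm (p (i : ZMod k)) (p ((i : ZMod k) + 1))) ^ 2
        / ↑(Complex.normSq (∏ i ∈ Finset.range k, herm (p (i : ZMod k)) (p ((i : ZMod k) + 1)))) := by
  have hk0 : 0 < k := by omega
  set P := ∏ i ∈ Finset.range k, herm (p (i : ZMod k)) (p ((i : ZMod k) + 1)) with hPdef
  set u : ℕ → ℂ :=
    fun i => -(herm c (p (i : ZMod k)) * herm (p (i : ZMod k)) (p ((i : ZMod k) + 1))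
      * herm (p ((i : ZMod k) + 1)) c) with hudef
  have hTre : ∀ i : ZMod k,
      (herm c (p i) * herm (p i) (p (i + 1)) * herm (p (i + 1)) c).re < 0 :=
    fun i => T_re_neg hc (hp i) (hp (i + 1)) (hadj i)
  have huz : ∀ i : ℕ, u i ≠ 0 := by
    intro i
    simp only [hudef, ne_eq, neg_eq_zero]
    intro h0
    have := hTre (i : ZMod k)
    rw [h0] at this
    simp at this
  -- LHS as product
  have hcast : (↑(∑ i ∈ Finset.range k, triArea c (p (i : ZMod k)) (p ((i : ZMod k) + 1))) : ℂ)
      * Complex.I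
      = ∑ i ∈ Finset.range k,
          (↑(triArea c (p (i : ZMod k)) (p ((i : ZMod k) + 1))) : ℂ) * Complex.I := by
    rw [Complex.ofReal_sum, Finset.sum_mul]
  rw [hcast, Complex.exp_sum]
  have hterm : ∀ i ∈ Finset.range k,
      Complex.exp ((↑(triArea c (p (i : ZMod k)) (p ((i : ZMod k) + 1))) : ℂ) * Complex.I)
        = u i ^ 2 / ↑(Complex.normSq (u i)) := by
    intro i _
    rw [show triArea c (p (i : ZMod k)) (p ((i : ZMod k) + 1))
        = 2 * Complex.arg (u i) from rfl]
    exact exp_two_arg (u i) (huz i)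
  rw [Finset.prod_congr rfl hterm, Finset.prod_div_distrib, Finset.prod_pow,
    ← Complex.ofReal_prod,
    show ∏ i ∈ Finset.range k, Complex.normSq (u i)
        = Complex.normSq (∏ i ∈ Finset.range k, u i) from (map_prod Complex.normSq _ _).symm]
  -- compute the product of u
  set N := ∏ i ∈ Finset.range k, Complex.normSq (herm c (p (i : ZMod k))) with hNdef
  have hNpos : 0 < N :=
    Finset.prod_pos (fun i _ => Complex.normSq_pos.mpr (herm_ne_zero hc (hp _)))
  have hPne : P ≠ 0 :=
    Finset.prod_ne_zero_iff.mpr (fun i _ => hadj _)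
  have hz : ∏ i ∈ Finset.range k, u i = (-1 : ℂ) ^ k * ((N : ℂ) * P) := by
    have h2 : ∏ i ∈ Finset.range k, (herm c (p (i : ZMod k)) * herm (p (i : ZMod k)) c)
        = (N : ℂ) := by
      rw [hNdef, Complex.ofReal_prod]
      refine Finset.prod_congr rfl (fun i _ => ?_)
      rw [herm_swap c (p (i : ZMod k)), Complex.mul_conj]
    calc ∏ i ∈ Finset.range k, u i
        = ∏ i ∈ Finset.range k,
            ((-1 : ℂ) * herm c (p (i : ZMod k)) * herm (p ((i : ZMod k) + 1)) c
              * herm (p (i : ZMod k)) (p ((i : ZMod k) + 1))) :=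
          Finset.prod_congr rfl (fun i _ => by simp only [hudef]; ring)
      _ = (∏ _i ∈ Finset.range k, (-1 : ℂ))
            * (∏ i ∈ Finset.range k, herm c (p (i : ZMod k)))
            * (∏ i ∈ Finset.range k, herm (p ((i : ZMod k) + 1)) c)
            * P := by
          rw [Finset.prod_mul_distrib, Finset.prod_mul_distrib, Finset.prod_mul_distrib]
      _ = (-1 : ℂ) ^ k
            * ((∏ i ∈ Finset.range k, herm c (p (i : ZMod k)))
              * (∏ i ∈ Finset.range k, herm (p (i : ZMod k)) c))
            * P := by
          rw [Finset.prod_const, Finset.card_range, prod_cycle hk0 (fun j => herm (p j) c)]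
          ring
      _ = (-1 : ℂ) ^ k * ((N : ℂ) * P) := by
          rw [← Finset.prod_mul_distrib, h2]
          ring
  have hsq1 : ((-1 : ℂ) ^ k) ^ 2 = 1 := by
    rw [← pow_mul, mul_comm, pow_mul, neg_one_sq, one_pow]
  have hz2 : (∏ i ∈ Finset.range k, u i) ^ 2 = ((N : ℂ) * P) ^ 2 := by
    rw [hz, mul_pow, hsq1, one_mul]
  have hzn : Complex.normSq (∏ i ∈ Finset.range k, u i) = Complex.normSq ((N : ℂ) * P) := by
    rw [hz, Complex.normSq_mul, map_pow, Complex.normSq_neg, Complex.normSq_one, one_pow, one_mul]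
  rw [hz2, hzn, aux_div N P (ne_of_gt hNpos) hPne]

lemma isNeg_iff (v : W) : IsNeg v ↔ Complex.normSq (v 0) < Complex.normSq (v 1) := by
  constructor
  · intro h
    have := h.2
    rw [herm_self_re] at this
    linarith
  · intro h
    refine ⟨?_, by rw [herm_self_re]; linarith⟩
    intro h0
    rw [h0] at h
    simp at h


lemma herm_cont_right (a : W) : Continuous fun x : W => herm a x := by
  unfold herm
  exact (continuous_const.mul (Complex.continuous_conj.comp (continuous_apply 0))).sub
    (continuous_const.mul (Complex.continuous_conj.comp (continuous_apply 1)))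

lemma herm_cont_left' (a : W) : Continuous fun x : W => herm x a := by
  unfold herm
  exact ((continuous_apply 0).mul continuous_const).sub
    ((continuous_apply 1).mul continuous_const)

lemma cont_pair {α : Type*} [TopologicalSpace α] {f g : α → ℂ} (hf : Continuous f)
    (hg : Continuous g) : Continuous fun a => (![f a, g a] : W) := by
  refine continuous_pi fun i => ?_
  refine Fin.cases ?_ (fun j => ?_) i
  · simpa only [Matrix.cons_val_zero] using hf
  · simp only [Matrix.cons_val_succ]
    refine Fin.cases ?_ (fun j2 => j2.elim0) j
    simpa only [Matrix.cons_val_zero] using hg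

lemma joined_neg {c c' : W} (hc : IsNeg c) (hc' : IsNeg c') :
    JoinedIn {v : W | IsNeg v} c c' := by
  have j1 : ∀ v : W, IsNeg v → JoinedIn {w : W | IsNeg w} v ![0, v 1] := by
    intro v hv
    refine ⟨⟨⟨fun t => ![((1 - (t : ℝ) : ℝ) : ℂ) * v 0, v 1], ?_⟩, ?_, ?_⟩, ?_⟩
    · exact cont_pair (by fun_prop) continuous_const
    · funext i
      fin_cases i <;> simp
    · funext i
      fin_cases i <;> simp
    · intro t
      show IsNeg ![((1 - (t : ℝ) : ℝ) : ℂ) * v 0, v 1]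
      rw [isNeg_iff]
      simp only [Matrix.cons_val_zero, Matrix.cons_val_one, Matrix.head_cons,
        Complex.normSq_mul, Complex.normSq_ofReal]
      have hv2 := (isNeg_iff v).mp hv
      have ht0 := t.2.1
      have ht1 := t.2.2
      have h2 : (1 - (t : ℝ)) * (1 - (t : ℝ)) * Complex.normSq (v 0) ≤ Complex.normSq (v 0) := by
        nlinarith [mul_nonneg (mul_nonneg ht0 (by linarith : (0:ℝ) ≤ 2 - (t : ℝ)))
          (Complex.normSq_nonneg (v 0))]
      linarith
  have hrank : 1 < Module.rank ℝ ℂ := by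
    rw [Complex.rank_real_complex]; norm_num
  have hpc := isPathConnected_compl_singleton_of_one_lt_rank hrank (0 : ℂ)
  have hc1 : c 1 ∈ ({(0 : ℂ)}ᶜ : Set ℂ) := by
    simp only [Set.mem_compl_iff, Set.mem_singleton_iff]
    intro h
    have := (isNeg_iff c).mp hc
    rw [h] at this
    simp at this
    nlinarith [Complex.normSq_nonneg (c 0)]
  have hc1' : c' 1 ∈ ({(0 : ℂ)}ᶜ : Set ℂ) := by
    simp only [Set.mem_compl_iff, Set.mem_singleton_iff]
    intro h
    have := (isNeg_iff c').mp hc'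
    rw [h] at this
    simp at this
    nlinarith [Complex.normSq_nonneg (c' 0)]
  obtain ⟨γ, hγ⟩ := hpc.joinedIn (c 1) hc1 (c' 1) hc1'
  have hmap : Continuous (fun z : ℂ => (![0, z] : W)) :=
    cont_pair continuous_const continuous_id
  have j2 : JoinedIn {w : W | IsNeg w} ![0, c 1] ![0, c' 1] := by
    refine ⟨γ.map hmap, fun t => ?_⟩
    show IsNeg ![0, γ t]
    rw [isNeg_iff]
    simp only [Matrix.cons_val_zero, Matrix.cons_val_one, Matrix.head_cons, Complex.normSq_zero]
    exact Complex.normSq_pos.mpr (hγ t)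
  exact ((j1 c hc).trans j2).trans (j1 c' hc').symm

/-- the area of a closed geodesic polygon does not depend on the
choice of the negative centre `c`. -/
theorem polygon_area_independent_of_centre
    (k : ℕ) (hk : 3 ≤ k) (p : ZMod k → W)
    (hp : ∀ i : ZMod k, IsNonpos (p i))
    (hadj : ∀ i : ZMod k, herm (p i) (p (i + 1)) ≠ 0)
    (c c' : W) (hc : IsNeg c) (hc' : IsNeg c') :
    (∑ i ∈ Finset.range k, triArea c (p (i : ZMod k)) (p ((i : ZMod k) + 1)))
      = ∑ i ∈ Finset.range k, triArea c' (p (i : ZMod k)) (p ((i : ZMod k) + 1)) := by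
  obtain ⟨γ, hγ⟩ := joined_neg hc hc'
  set f : W → ℝ :=
    fun x => ∑ i ∈ Finset.range k, triArea x (p (i : ZMod k)) (p ((i : ZMod k) + 1)) with hf
  show f c = f c'
  set F : ℝ → ℝ := fun t => f (γ.extend t) with hF
  have hmem : ∀ t : ℝ, IsNeg (γ.extend t) := by
    intro t
    have h1 : γ.extend t ∈ Set.range ⇑γ := by
      rw [← Path.extend_range]; exact Set.mem_range_self t
    obtain ⟨s, hs⟩ := h1
    rw [← hs]
    exact hγ s
  have hint : ∀ t : ℝ, ∃ n : ℤ, F t - F 0 = n * (2 * Real.pi) := by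
    intro t
    have h1 := exp_areaSum hk p hp hadj (γ.extend t) (hmem t)
    have h2 := exp_areaSum hk p hp hadj (γ.extend 0) (hmem 0)
    have h3 : Complex.exp ((F t : ℂ) * Complex.I) = Complex.exp ((F 0 : ℂ) * Complex.I) :=
      h1.trans h2.symm
    have h4 : Complex.exp (((F t : ℝ) - F 0 : ℝ) * Complex.I) = 1 := by
      push_cast
      rw [sub_mul, Complex.exp_sub, h3, div_self (Complex.exp_ne_zero _)]
    rw [Complex.exp_eq_one_iff] at h4
    obtain ⟨n, hn⟩ := h4
    refine ⟨n, ?_⟩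
    have h5 := congrArg Complex.im hn
    simpa using h5
  have hFcont : Continuous F := by
    have : F = fun t => ∑ i ∈ Finset.range k,
        triArea (γ.extend t) (p (i : ZMod k)) (p ((i : ZMod k) + 1)) := rfl
    rw [this]
    apply continuous_finset_sum
    intro i _
    rw [continuous_iff_continuousAt]
    intro t
    have hmt := hmem t
    have hcu : Continuous (fun x : W =>
        -(herm x (p (i : ZMod k)) * herm (p (i : ZMod k)) (p ((i : ZMod k) + 1))
          * herm (p ((i : ZMod k) + 1)) x)) := by
      exact (((herm_cont_left' (p (i : ZMod k))).mul continuous_const).mul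
        (herm_cont_right (p ((i : ZMod k) + 1)))).neg
    have hval : -(herm (γ.extend t) (p (i : ZMod k))
          * herm (p (i : ZMod k)) (p ((i : ZMod k) + 1))
          * herm (p ((i : ZMod k) + 1)) (γ.extend t)) ∈ Complex.slitPlane := by
      rw [Complex.mem_slitPlane_iff]
      left
      have := T_re_neg hmt (hp (i : ZMod k)) (hp ((i : ZMod k) + 1)) (hadj (i : ZMod k))
      rw [Complex.neg_re]
      linarith
    show ContinuousAt (fun s : ℝ => triArea (γ.extend s) (p (i : ZMod k)) (p ((i : ZMod k) + 1))) t
    have hcont2 : Continuous (fun s : ℝ =>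
        -(herm (γ.extend s) (p (i : ZMod k))
          * herm (p (i : ZMod k)) (p ((i : ZMod k) + 1))
          * herm (p ((i : ZMod k) + 1)) (γ.extend s))) := hcu.comp γ.continuous_extend
    have harg := ContinuousAt.comp (x := t)
      (f := fun s : ℝ => -(herm (γ.extend s) (p (i : ZMod k))
        * herm (p (i : ZMod k)) (p ((i : ZMod k) + 1))
        * herm (p ((i : ZMod k) + 1)) (γ.extend s)))
      (Complex.continuousAt_arg hval) hcont2.continuousAt
    exact continuousAt_const.mul harg
  have hpi := Real.pi_pos
  have h10 : F 1 = F 0 := by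
    by_contra hne
    obtain ⟨n, hn⟩ := hint 1
    rcases lt_or_gt_of_ne hne with hlt | hgt
    · have hnn : (n : ℝ) * (2 * Real.pi) < 0 := by rw [← hn]; linarith
      have hn0 : n < 0 := by
        by_contra hge
        push_neg at hge
        have : (0 : ℝ) ≤ (n : ℝ) := by exact_mod_cast hge
        nlinarith
      have hn1 : (n : ℝ) ≤ -1 := by exact_mod_cast (by omega : n ≤ -1)
      have hgap : F 1 + 2 * Real.pi ≤ F 0 := by nlinarith
      have hIcc : F 0 - Real.pi ∈ Set.Icc (F 1) (F 0) := ⟨by linarith, by linarith⟩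
      obtain ⟨t, _, ht⟩ :=
        intermediate_value_Icc' (by norm_num : (0 : ℝ) ≤ 1) hFcont.continuousOn hIcc
      obtain ⟨m, hm⟩ := hint t
      rw [ht] at hm
      have hm' : -Real.pi = (m : ℝ) * (2 * Real.pi) := by linarith
      rcases le_or_gt m (-1) with h | h
      · have : (m : ℝ) ≤ -1 := by exact_mod_cast h
        nlinarith
      · have : (0 : ℝ) ≤ (m : ℝ) := by exact_mod_cast (by omega : (0 : ℤ) ≤ m)
        nlinarith
    · have hnn : (0 : ℝ) < (n : ℝ) * (2 * Real.pi) := by rw [← hn]; linarith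
      have hn0 : 0 < n := by
        by_contra hge
        push_neg at hge
        have : (n : ℝ) ≤ 0 := by exact_mod_cast hge
        nlinarith
      have hn1 : (1 : ℝ) ≤ (n : ℝ) := by exact_mod_cast (by omega : 1 ≤ n)
      have hgap : F 0 + 2 * Real.pi ≤ F 1 := by nlinarith
      have hIcc : F 0 + Real.pi ∈ Set.Icc (F 0) (F 1) := ⟨by linarith, by linarith⟩
      obtain ⟨t, _, ht⟩ :=
        intermediate_value_Icc (by norm_num : (0 : ℝ) ≤ 1) hFcont.continuousOn hIcc
      obtain ⟨m, hm⟩ := hint t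
      rw [ht] at hm
      have hm' : Real.pi = (m : ℝ) * (2 * Real.pi) := by linarith
      rcases le_or_gt m 0 with h | h
      · have : (m : ℝ) ≤ 0 := by exact_mod_cast h
        nlinarith
      · have : (1 : ℝ) ≤ (m : ℝ) := by exact_mod_cast (by omega : (1 : ℤ) ≤ m)
        nlinarith
  have e1 : F 1 = f c' := by rw [hF]; simp only [Path.extend_one]
  have e0 : F 0 = f c := by rw [hF]; simp only [Path.extend_zero]
  rw [← e0, ← e1, h10]


end HView
end
end

section
/- Let n ≥ 5. For each i (indices modulo n) there is a unique automorphism E_i of H_n with E_i(r_{i−1}) = r_i, E_i(r_i) = r_i r_{i−1} r_i and E_i(r_j) = r_j for all j ∉ {i−1, i}. There is a unique automorphism J of H_n with J(r_i) = r_{n−i} for all i (indices modulo n, r₀ = r_n), and J² = 1. There is a unique automorphism S of H_n with S(r_i) = r_{i+1} for all i, and S^n = 1. -/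
noncomputable section
open Matrix Complex
namespace HView

section AutAux

variable {n : ℕ}

lemma rsq (i : ZMod n) : r n i * r n i = 1 := by
  have h2 : PresentedGroup.mk (Hrels n) (FreeGroup.of i * FreeGroup.of i) = 1 :=
    (QuotientGroup.eq_one_iff _).mpr (Subgroup.subset_normalClosure (Or.inl ⟨i, rfl⟩))
  rw [_root_.map_mul] at h2
  exact h2

lemma rinv (i : ZMod n) : (r n i)⁻¹ = r n i := inv_eq_of_mul_eq_one_right (rsq i)

/-- `Qa n a m = r (a+m) * r (a+m-1) * ⋯ * r (a+1)`. -/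
def Qa (n : ℕ) : ZMod n → ℕ → H n
  | _, 0 => 1
  | a, (m+1) => r n (a + ((m+1 : ℕ) : ZMod n)) * Qa n a m

lemma Qa_succ (a : ZMod n) (m : ℕ) : Qa n a (m+1) = Qa n (a+1) m * r n (a+1) := by
  induction m generalizing a with
  | zero =>
      show r n (a + ((1:ℕ) : ZMod n)) * (1 : H n) = (1 : H n) * r n (a+1)
      rw [Nat.cast_one, mul_one, one_mul]
  | succ m ih =>
      have hidx : a + ((m+1+1:ℕ) : ZMod n) = (a+1) + ((m+1:ℕ) : ZMod n) := by push_cast; ring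
      calc Qa n a (m+1+1) = r n (a + ((m+1+1:ℕ) : ZMod n)) * Qa n a (m+1) := rfl
        _ = r n ((a+1) + ((m+1:ℕ) : ZMod n)) * (Qa n (a+1) m * r n (a+1)) := by rw [hidx, ih]
        _ = (r n ((a+1) + ((m+1:ℕ) : ZMod n)) * Qa n (a+1) m) * r n (a+1) := by
              rw [mul_assoc]
        _ = Qa n (a+1) (m+1) * r n (a+1) := rfl

lemma listQ (a : ZMod n) (m : ℕ) :
    (((List.range m).map (fun k => r n (a + ((k+1:ℕ) : ZMod n)))).reverse).prod = Qa n a m := by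
  induction m with
  | zero => simp [Qa]
  | succ m ih =>
      have h : Qa n a (m+1) = r n (a + ((m+1:ℕ) : ZMod n)) * Qa n a m := rfl
      rw [h, ← ih, List.range_succ, List.map_append, List.reverse_append]
      simp

lemma Qa_zero : Qa n 0 n = 1 := by
  have h2 : PresentedGroup.mk (Hrels n) (longRel n) = 1 :=
    (QuotientGroup.eq_one_iff _).mpr (Subgroup.subset_normalClosure (Or.inr rfl))
  rw [longRel, map_list_prod, List.map_reverse, List.map_map] at h2
  have he : ((PresentedGroup.mk (Hrels n)) ∘ fun k => FreeGroup.of ((k+1:ℕ) : ZMod n))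
      = (fun k => r n (0 + ((k+1:ℕ) : ZMod n))) := by
    funext k
    show PresentedGroup.mk (Hrels n) (FreeGroup.of ((k+1:ℕ) : ZMod n)) = _
    rw [zero_add]
    rfl
  rw [he, listQ 0 n] at h2
  exact h2

lemma Qa_conj (a : ZMod n) : Qa n (a+1) n = r n (a+1) * Qa n a n * r n (a+1) := by
  have h1 : Qa n a (n+1) = Qa n (a+1) n * r n (a+1) := Qa_succ a n
  have h2 : Qa n a (n+1) = r n (a+1) * Qa n a n := by
    show r n (a + ((n+1:ℕ) : ZMod n)) * Qa n a n = _
    have : a + ((n+1:ℕ) : ZMod n) = a + 1 := by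
      push_cast [ZMod.natCast_self]; ring
    rw [this]
  have h3 : Qa n (a+1) n = Qa n a (n+1) * r n (a+1) := by
    rw [h1, mul_assoc, rsq, mul_one]
  rw [h3, h2]

lemma Qa_one [NeZero n] (a : ZMod n) : Qa n a n = 1 := by
  have key : ∀ m : ℕ, Qa n ((m : ℕ) : ZMod n) n = 1 := by
    intro m
    induction m with
    | zero => simpa using Qa_zero
    | succ m ih =>
        have hc : ((m+1:ℕ) : ZMod n) = ((m:ℕ) : ZMod n) + 1 := by push_cast; ring
        rw [hc, Qa_conj, ih, mul_one, rsq]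
  have h := key a.val
  rwa [ZMod.natCast_rightInverse a] at h

lemma listQ' (a : ZMod n) (m : ℕ) :
    ((List.range m).map (fun k => r n (a - (k:ℕ)))).prod = Qa n (a - (m:ℕ)) m := by
  induction m with
  | zero => simp [Qa]
  | succ m ih =>
      rw [List.range_succ, List.map_append, List.prod_append]
      simp only [List.map_cons, List.map_nil, List.prod_cons, List.prod_nil, mul_one]
      rw [ih]
      have h1 : Qa n (a - ((m+1:ℕ) : ZMod n)) (m+1)
          = Qa n (a - ((m+1:ℕ) : ZMod n) + 1) m * r n (a - ((m+1:ℕ) : ZMod n) + 1) :=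
        Qa_succ _ m
      have h2 : a - ((m+1:ℕ) : ZMod n) + 1 = a - (m:ℕ) := by push_cast; ring
      rw [h1, h2]

/-- Build an endomorphism of `H n` from generator images. -/
def mkHom (f : ZMod n → H n) (hsq : ∀ i, f i * f i = 1)
    (hlong : (((List.range n).map (fun k => f ((k+1:ℕ) : ZMod n))).reverse).prod = 1) :
    H n →* H n :=
  PresentedGroup.toGroup (f := f) (by
    rintro x hx
    rcases hx with ⟨i, rfl⟩ | rfl
    · rw [_root_.map_mul, show ∀ x : ZMod n, FreeGroup.lift f (FreeGroup.of x) = f x from fun x => FreeGroup.lift_apply_of]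
      exact hsq i
    · rw [longRel, map_list_prod, List.map_reverse, List.map_map]
      have he : ((FreeGroup.lift f) ∘ fun k => FreeGroup.of ((k+1:ℕ) : ZMod n))
          = (fun k => f ((k+1:ℕ) : ZMod n)) := by
        funext k
        exact FreeGroup.lift_apply_of
      rw [he]
      exact hlong)

lemma mkHom_r (f : ZMod n → H n) (hsq : ∀ i, f i * f i = 1)
    (hlong : (((List.range n).map (fun k => f ((k+1:ℕ) : ZMod n))).reverse).prod = 1)
    (i : ZMod n) : mkHom f hsq hlong (r n i) = f i :=
  PresentedGroup.toGroup.of _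

lemma hom_ext {G : Type*} [Group G] {φ ψ : H n →* G}
    (h : ∀ i : ZMod n, φ (r n i) = ψ (r n i)) : φ = ψ :=
  PresentedGroup.ext h

lemma comp_fix {φ ψ : H n →* H n} (h : ∀ i, ψ (φ (r n i)) = r n i) (x : H n) : ψ (φ x) = x := by
  have he : ψ.comp φ = MonoidHom.id (H n) := hom_ext (by intro i; simpa using h i)
  simpa using DFunLike.congr_fun he x

/-- Build an automorphism of `H n` from two mutually inverse endomorphisms. -/
def mkAut (F G : H n →* H n) (h1 : ∀ i, G (F (r n i)) = r n i)
    (h2 : ∀ i, F (G (r n i)) = r n i) : MulAut (H n) :=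
  { toFun := F, invFun := G, left_inv := comp_fix h1, right_inv := comp_fix h2,
    map_mul' := map_mul F }

lemma aut_ext {A B : MulAut (H n)} (h : ∀ i : ZMod n, A (r n i) = B (r n i)) : A = B :=
  MulEquiv.toMonoidHom_injective (hom_ext h)

lemma conj_sq {G : Type*} [Group G] {a b : G} (ha : a*a = 1) (hb : b*b = 1) :
    (a*b*a)*(a*b*a) = 1 := by
  have h : (a*b*a)*(a*b*a) = a*(b*((a*a)*b))*a := by group
  rw [h, ha, one_mul, hb, mul_one, ha]

lemma conj_cancel {G : Type*} [Group G] {a b : G} (hb : b*b = 1) : b*(b*a*b)*b = a := by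
  have h : b*(b*a*b)*b = (b*b)*a*(b*b) := by group
  rw [h, hb, one_mul, mul_one]

def fS (n : ℕ) : ZMod n → H n := fun j => r n (j + 1)
def fSi (n : ℕ) : ZMod n → H n := fun j => r n (j - 1)
def fJ (n : ℕ) : ZMod n → H n := fun j => r n (-j)
def fE (n : ℕ) : ZMod n → H n := fun j =>
  if j = -1 then r n 0 else if j = 0 then r n 0 * r n (-1) * r n 0 else r n j
def fG (n : ℕ) : ZMod n → H n := fun j =>
  if j = 0 then r n (-1) else if j = -1 then r n (-1) * r n 0 * r n (-1) else r n j

lemma long_fS [NeZero n] :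
    (((List.range n).map (fun k => fS n ((k+1:ℕ) : ZMod n))).reverse).prod = 1 := by
  have he : (fun k => fS n ((k+1:ℕ) : ZMod n))
      = (fun k => r n ((1 : ZMod n) + ((k+1:ℕ) : ZMod n))) := by
    funext k; show r n _ = r n _; rw [add_comm]
  rw [he, listQ, Qa_one]

lemma long_fSi [NeZero n] :
    (((List.range n).map (fun k => fSi n ((k+1:ℕ) : ZMod n))).reverse).prod = 1 := by
  have he : (fun k => fSi n ((k+1:ℕ) : ZMod n))
      = (fun k => r n ((-1 : ZMod n) + ((k+1:ℕ) : ZMod n))) := by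
    funext k; show r n _ = r n _; congr 1; ring
  rw [he, listQ, Qa_one]

lemma long_fJ [NeZero n] :
    (((List.range n).map (fun k => fJ n ((k+1:ℕ) : ZMod n))).reverse).prod = 1 := by
  rw [List.prod_reverse_noncomm, List.map_map]
  have he : ((fun x : H n => x⁻¹) ∘ fun k => fJ n ((k+1:ℕ) : ZMod n))
      = (fun k => r n ((-1 : ZMod n) - (k:ℕ))) := by
    funext k
    show (r n (-((k+1:ℕ) : ZMod n)))⁻¹ = _
    rw [rinv]
    congr 1; push_cast; ring
  rw [he, listQ']
  have h : (-1 : ZMod n) - ((n:ℕ) : ZMod n) = -1 := by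
    rw [ZMod.natCast_self, sub_zero]
  rw [h, Qa_one, inv_one]

lemma neg_one_ne_zero' (hn : 2 ≤ n) : (-1 : ZMod n) ≠ 0 := by
  haveI : NeZero n := ⟨by omega⟩
  intro h
  obtain ⟨m, rfl⟩ : ∃ m, n = m+1 := ⟨n-1, by omega⟩
  have hv := congrArg ZMod.val h
  rw [ZMod.val_neg_one, ZMod.val_zero] at hv
  omega

lemma cast_ne (hn : 5 ≤ n) {k : ℕ} (hk : k < n - 2) :
    ((k+1:ℕ) : ZMod n) ≠ 0 ∧ ((k+1:ℕ) : ZMod n) ≠ -1 := by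
  haveI : NeZero n := ⟨by omega⟩
  have hval : ((k+1:ℕ) : ZMod n).val = k+1 := ZMod.val_natCast_of_lt (by omega)
  constructor
  · intro h; rw [h, ZMod.val_zero] at hval; omega
  · intro h
    rw [h] at hval
    obtain ⟨m, rfl⟩ : ∃ m, n = m+1 := ⟨n-1, by omega⟩
    rw [ZMod.val_neg_one] at hval
    omega

lemma split2 {M : Type*} [Monoid M] (g : ℕ → M) (m : ℕ) :
    (((List.range (m+2)).map g).reverse).prod
      = g (m+1) * (g m * (((List.range m).map g).reverse).prod) := by
  rw [List.range_succ, List.range_succ]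
  simp [mul_assoc]

lemma long_core (hn : 5 ≤ n) :
    ∀ m, n = m + 2 → r n 0 * (r n (-1) * Qa n 0 m) = 1 := by
  intro m hm
  have h0 : ((m+2:ℕ) : ZMod n) = 0 := by rw [← hm]; exact ZMod.natCast_self n
  have h1 : ((m+1:ℕ) : ZMod n) = -1 := by
    push_cast at h0 ⊢
    linear_combination h0
  have hQ : Qa n 0 (m+2) = r n (0 + ((m+2:ℕ) : ZMod n)) * (r n (0 + ((m+1:ℕ) : ZMod n)) * Qa n 0 m) := rfl
  have hz : Qa n 0 (m+2) = 1 := by rw [← hm]; exact Qa_zero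
  rw [hQ, h0, h1, zero_add, zero_add] at hz
  exact hz

lemma tail_fE (hn : 5 ≤ n) (m : ℕ) (hm : n = m + 2) :
    (((List.range m).map (fun k => fE n ((k+1:ℕ) : ZMod n))).reverse).prod = Qa n 0 m := by
  have he : List.map (fun k => fE n ((k+1:ℕ) : ZMod n)) (List.range m)
      = List.map (fun k => r n ((0 : ZMod n) + ((k+1:ℕ) : ZMod n))) (List.range m) := by
    apply List.map_congr_left
    intro k hk
    have hk' : k < n - 2 := by rw [List.mem_range] at hk; omega
    obtain ⟨hne0, hne1⟩ := cast_ne hn hk'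
    show fE n _ = _
    rw [fE, if_neg hne1, if_neg hne0, zero_add]
  rw [he, listQ]

lemma tail_fG (hn : 5 ≤ n) (m : ℕ) (hm : n = m + 2) :
    (((List.range m).map (fun k => fG n ((k+1:ℕ) : ZMod n))).reverse).prod = Qa n 0 m := by
  have he : List.map (fun k => fG n ((k+1:ℕ) : ZMod n)) (List.range m)
      = List.map (fun k => r n ((0 : ZMod n) + ((k+1:ℕ) : ZMod n))) (List.range m) := by
    apply List.map_congr_left
    intro k hk
    have hk' : k < n - 2 := by rw [List.mem_range] at hk; omega
    obtain ⟨hne0, hne1⟩ := cast_ne hn hk'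
    show fG n _ = _
    rw [fG, if_neg hne0, if_neg hne1, zero_add]
  rw [he, listQ]

lemma long_fE (hn : 5 ≤ n) :
    (((List.range n).map (fun k => fE n ((k+1:ℕ) : ZMod n))).reverse).prod = 1 := by
  obtain ⟨m, hm⟩ : ∃ m, n = m + 2 := ⟨n - 2, by omega⟩
  have h0 : ((m+2:ℕ) : ZMod n) = 0 := by rw [← hm]; exact ZMod.natCast_self n
  have h1 : ((m+1:ℕ) : ZMod n) = -1 := by push_cast at h0 ⊢; linear_combination h0
  have hne : (0 : ZMod n) ≠ -1 := (neg_one_ne_zero' (by omega)).symm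
  have hn0 : ((n:ℕ) : ZMod n) = 0 := ZMod.natCast_self n
  have hc2 : ((m+1+1:ℕ) : ZMod n) = 0 := by
    push_cast at h0 ⊢; linear_combination h0
  rw [hm, split2, ← hm, tail_fE hn m hm]
  simp only [hn0, hc2, h0, h1]
  have hg1 : fE n 0 = r n 0 * r n (-1) * r n 0 := by rw [fE, if_neg hne, if_pos rfl]
  have hg2 : fE n (-1) = r n 0 := by rw [fE, if_pos rfl]
  rw [hg1, hg2]
  have hcore := long_core hn m hm
  have hgrp : (r n 0 * r n (-1) * r n 0) * (r n 0 * Qa n 0 m)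
      = r n 0 * (r n (-1) * ((r n 0 * r n 0) * Qa n 0 m)) := by group
  rw [hgrp, rsq, one_mul]
  exact hcore

lemma long_fG (hn : 5 ≤ n) :
    (((List.range n).map (fun k => fG n ((k+1:ℕ) : ZMod n))).reverse).prod = 1 := by
  obtain ⟨m, hm⟩ : ∃ m, n = m + 2 := ⟨n - 2, by omega⟩
  have h0 : ((m+2:ℕ) : ZMod n) = 0 := by rw [← hm]; exact ZMod.natCast_self n
  have h1 : ((m+1:ℕ) : ZMod n) = -1 := by push_cast at h0 ⊢; linear_combination h0
  have hne : (-1 : ZMod n) ≠ 0 := neg_one_ne_zero' (by omega)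
  have hn0 : ((n:ℕ) : ZMod n) = 0 := ZMod.natCast_self n
  have hc2 : ((m+1+1:ℕ) : ZMod n) = 0 := by
    push_cast at h0 ⊢; linear_combination h0
  rw [hm, split2, ← hm, tail_fG hn m hm]
  simp only [hn0, hc2, h0, h1]
  have hg1 : fG n 0 = r n (-1) := by rw [fG, if_pos rfl]
  have hg2 : fG n (-1) = r n (-1) * r n 0 * r n (-1) := by rw [fG, if_neg hne, if_pos rfl]
  rw [hg1, hg2]
  have hcore := long_core hn m hm
  have hgrp : r n (-1) * ((r n (-1) * r n 0 * r n (-1)) * Qa n 0 m)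
      = (r n (-1) * r n (-1)) * (r n 0 * (r n (-1) * Qa n 0 m)) := by group
  rw [hgrp, rsq, one_mul]
  exact hcore

lemma sq_fE (hn : 5 ≤ n) (i : ZMod n) : fE n i * fE n i = 1 := by
  rw [fE]
  split_ifs
  · exact rsq _
  · exact conj_sq (rsq _) (rsq _)
  · exact rsq _

lemma sq_fG (hn : 5 ≤ n) (i : ZMod n) : fG n i * fG n i = 1 := by
  rw [fG]
  split_ifs
  · exact rsq _
  · exact conj_sq (rsq _) (rsq _)
  · exact rsq _

end AutAux

section AutDefs

variable {n : ℕ}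

def FSh (n : ℕ) [NeZero n] : H n →* H n := mkHom (fS n) (fun _ => rsq _) long_fS
def FSih (n : ℕ) [NeZero n] : H n →* H n := mkHom (fSi n) (fun _ => rsq _) long_fSi
def FJh (n : ℕ) [NeZero n] : H n →* H n := mkHom (fJ n) (fun _ => rsq _) long_fJ
def FEh (n : ℕ) (hn : 5 ≤ n) [NeZero n] : H n →* H n := mkHom (fE n) (sq_fE hn) (long_fE hn)
def FGh (n : ℕ) (hn : 5 ≤ n) [NeZero n] : H n →* H n := mkHom (fG n) (sq_fG hn) (long_fG hn)

lemma FSh_r [NeZero n] (i : ZMod n) : FSh n (r n i) = r n (i+1) := mkHom_r _ _ _ i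
lemma FSih_r [NeZero n] (i : ZMod n) : FSih n (r n i) = r n (i-1) := mkHom_r _ _ _ i
lemma FJh_r [NeZero n] (i : ZMod n) : FJh n (r n i) = r n (-i) := mkHom_r _ _ _ i
lemma FEh_r [NeZero n] (hn : 5 ≤ n) (i : ZMod n) : FEh n hn (r n i) = fE n i := mkHom_r _ _ _ i
lemma FGh_r [NeZero n] (hn : 5 ≤ n) (i : ZMod n) : FGh n hn (r n i) = fG n i := mkHom_r _ _ _ i

def Shat (n : ℕ) [NeZero n] : MulAut (H n) :=
  mkAut (FSh n) (FSih n)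
    (fun i => by rw [FSh_r, FSih_r]; congr 1; ring)
    (fun i => by rw [FSih_r, FSh_r]; congr 1; ring)

lemma Shat_r [NeZero n] (i : ZMod n) : Shat n (r n i) = r n (i+1) := FSh_r i

def Jhat (n : ℕ) [NeZero n] : MulAut (H n) :=
  mkAut (FJh n) (FJh n)
    (fun i => by rw [FJh_r, FJh_r, neg_neg])
    (fun i => by rw [FJh_r, FJh_r, neg_neg])

lemma Jhat_r [NeZero n] (i : ZMod n) : Jhat n (r n i) = r n (-i) := FJh_r i

lemma GE_fix [NeZero n] (hn : 5 ≤ n) (i : ZMod n) : FGh n hn (FEh n hn (r n i)) = r n i := by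
  have hne : (-1 : ZMod n) ≠ 0 := neg_one_ne_zero' (by omega)
  rw [FEh_r]
  by_cases h1 : i = -1
  · subst h1
    rw [show fE n (-1) = r n 0 from by rw [fE, if_pos rfl], FGh_r,
      show fG n 0 = r n (-1) from by rw [fG, if_pos rfl]]
  · by_cases h2 : i = 0
    · subst h2
      rw [show fE n 0 = r n 0 * r n (-1) * r n 0 from by
        rw [fE, if_neg (Ne.symm hne), if_pos rfl]]
      rw [_root_.map_mul, _root_.map_mul, FGh_r, FGh_r]
      rw [show fG n 0 = r n (-1) from by rw [fG, if_pos rfl],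
        show fG n (-1) = r n (-1) * r n 0 * r n (-1) from by rw [fG, if_neg hne, if_pos rfl]]
      exact conj_cancel (rsq _)
    · rw [show fE n i = r n i from by rw [fE, if_neg h1, if_neg h2], FGh_r,
        show fG n i = r n i from by rw [fG, if_neg h2, if_neg h1]]

lemma EG_fix [NeZero n] (hn : 5 ≤ n) (i : ZMod n) : FEh n hn (FGh n hn (r n i)) = r n i := by
  have hne : (-1 : ZMod n) ≠ 0 := neg_one_ne_zero' (by omega)
  rw [FGh_r]
  by_cases h2 : i = 0
  · subst h2
    rw [show fG n 0 = r n (-1) from by rw [fG, if_pos rfl], FEh_r,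
      show fE n (-1) = r n 0 from by rw [fE, if_pos rfl]]
  · by_cases h1 : i = -1
    · subst h1
      rw [show fG n (-1) = r n (-1) * r n 0 * r n (-1) from by
        rw [fG, if_neg hne, if_pos rfl]]
      rw [_root_.map_mul, _root_.map_mul, FEh_r, FEh_r]
      rw [show fE n (-1) = r n 0 from by rw [fE, if_pos rfl],
        show fE n 0 = r n 0 * r n (-1) * r n 0 from by
          rw [fE, if_neg (Ne.symm hne), if_pos rfl]]
      exact conj_cancel (rsq _)
    · rw [show fG n i = r n i from by rw [fG, if_neg h2, if_neg h1], FEh_r,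
        show fE n i = r n i from by rw [fE, if_neg h1, if_neg h2]]

def E0hat (n : ℕ) (hn : 5 ≤ n) [NeZero n] : MulAut (H n) :=
  mkAut (FEh n hn) (FGh n hn) (GE_fix hn) (EG_fix hn)

lemma E0hat_r [NeZero n] (hn : 5 ≤ n) (i : ZMod n) : E0hat n hn (r n i) = fE n i :=
  FEh_r hn i

lemma pow_r' [NeZero n] {A : MulAut (H n)} (hA : ∀ j, A (r n j) = r n (j+1)) :
    ∀ (m : ℕ) (j : ZMod n), (A^m) (r n j) = r n (j + (m:ℕ))
  | 0, j => by simp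
  | (m+1), j => by
      rw [pow_succ, MulAut.mul_apply, hA, pow_r' hA m]
      congr 1; push_cast; ring

lemma pow_inv_r [NeZero n] {A : MulAut (H n)} (hA : ∀ j, A (r n j) = r n (j+1))
    (m : ℕ) (j : ZMod n) : ((A^m)⁻¹) (r n j) = r n (j - (m:ℕ)) := by
  have h := pow_r' hA m (j - (m:ℕ))
  have h2 : j - (m:ℕ) + (m:ℕ) = j := by ring
  rw [h2] at h
  rw [← h, MulAut.inv_apply_self]

end AutDefs


/-- existence and uniqueness of the automorphisms `E_i`, `J` (with
`J² = 1`) and `S` (with `Sⁿ = 1`) of `H_n`. -/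
theorem automorphisms_exist (n : ℕ) (hn : 5 ≤ n) :
    (∀ i : ZMod n, ∃! E : MulAut (H n),
      E (r n (i - 1)) = r n i ∧ E (r n i) = r n i * r n (i - 1) * r n i ∧
      ∀ j : ZMod n, j ≠ i - 1 → j ≠ i → E (r n j) = r n j) ∧
    (∃! Jaut : MulAut (H n), ∀ i : ZMod n, Jaut (r n i) = r n (-i)) ∧
    (∀ Jaut : MulAut (H n), (∀ i : ZMod n, Jaut (r n i) = r n (-i)) →
      Jaut * Jaut = 1) ∧
    (∃! S : MulAut (H n), ∀ i : ZMod n, S (r n i) = r n (i + 1)) ∧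
    (∀ S : MulAut (H n), (∀ i : ZMod n, S (r n i) = r n (i + 1)) → S ^ n = 1) := by
  haveI : NeZero n := ⟨by omega⟩
  have hne : (-1 : ZMod n) ≠ 0 := neg_one_ne_zero' (by omega)
  have hfE1 : fE n (-1) = r n 0 := by rw [fE, if_pos rfl]
  have hfE0 : fE n 0 = r n 0 * r n (-1) * r n 0 := by
    rw [fE, if_neg (Ne.symm hne), if_pos rfl]
  have hfEo : ∀ j : ZMod n, j ≠ -1 → j ≠ 0 → fE n j = r n j := fun j h1 h2 => by
    rw [fE, if_neg h1, if_neg h2]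
  refine ⟨?_, ?_, ?_, ?_, ?_⟩
  · intro i
    set v : ℕ := i.val with hvdef
    have hv : ((v:ℕ) : ZMod n) = i := ZMod.natCast_rightInverse i
    set A : MulAut (H n) := (Shat n)^v * E0hat n hn * ((Shat n)^v)⁻¹ with hA
    have happ : ∀ x, A x = ((Shat n)^v) (E0hat n hn (((Shat n)^v)⁻¹ x)) := by
      intro x; rw [hA, MulAut.mul_apply, MulAut.mul_apply]
    have h1 : A (r n (i-1)) = r n i := by
      rw [happ, pow_inv_r Shat_r]
      have e1 : i - 1 - (v:ℕ) = -1 := by rw [hv]; ring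
      rw [e1, E0hat_r, hfE1, pow_r' Shat_r, zero_add, hv]
    have h2 : A (r n i) = r n i * r n (i-1) * r n i := by
      rw [happ, pow_inv_r Shat_r]
      have e1 : i - (v:ℕ) = 0 := by rw [hv]; ring
      rw [e1, E0hat_r, hfE0, _root_.map_mul, _root_.map_mul,
        pow_r' Shat_r, pow_r' Shat_r]
      have e2 : (0:ZMod n) + (v:ℕ) = i := by rw [hv]; ring
      have e3 : (-1:ZMod n) + (v:ℕ) = i - 1 := by rw [hv]; ring
      rw [e2, e3]
    have h3 : ∀ j, j ≠ i - 1 → j ≠ i → A (r n j) = r n j := by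
      intro j hj1 hj2
      rw [happ, pow_inv_r Shat_r]
      have e1 : j - (v:ℕ) ≠ -1 := by
        rw [hv]; intro h; exact hj1 (by linear_combination h)
      have e2 : j - (v:ℕ) ≠ 0 := by
        rw [hv]; intro h; exact hj2 (by linear_combination h)
      rw [E0hat_r, hfEo _ e1 e2, pow_r' Shat_r]
      congr 1; ring
    refine ⟨A, ⟨h1, h2, h3⟩, ?_⟩
    rintro E ⟨hE1, hE2, hE3⟩
    apply aut_ext
    intro j
    by_cases hj1 : j = i - 1
    · subst hj1; rw [hE1, h1]
    · by_cases hj2 : j = i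
      · subst hj2; rw [hE2, h2]
      · rw [hE3 j hj1 hj2, h3 j hj1 hj2]
  · exact ⟨Jhat n, fun i => Jhat_r i,
      fun E hE => aut_ext fun i => by rw [hE i, Jhat_r i]⟩
  · intro Jaut hJ
    apply aut_ext
    intro i
    rw [MulAut.mul_apply, hJ i, hJ (-i), neg_neg, MulAut.one_apply]
  · exact ⟨Shat n, fun i => Shat_r i,
      fun E hE => aut_ext fun i => by rw [hE i, Shat_r i]⟩
  · intro S hS
    apply aut_ext
    intro i
    rw [pow_r' hS n i, MulAut.one_apply, ZMod.natCast_self, add_zero]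


end HView
end
end
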